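/- arXiv:0911.2605 — 4 statements merged into one kernel-verified Lean document; each statement's English description precedes it below -/
import Mathlib

section
/- For 0 ≤ t ≤ T, T > 0, p > 1, β > 0, and all real ξ, the kernel A(ξ,t) = e^{-tξ²}/(β e^{(p-1)Tξ²} + e^{-Tξ²}) satisfies A(ξ,t) ≤ β^{(t-T)/(pT)}. -/
open Real
theorem kernel_A_bound (T p β t ξ : ℝ) (hT : 0 < T) (hp : 1 < p) (hβ : 0 < β)
    (ht0 : 0 ≤ t) (htT : t ≤ T) :
    Real.exp (-t * ξ ^ 2) / (β * Real.exp ((p - 1) * T * ξ ^ 2) + Real.exp (-T * ξ ^ 2)) ≤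
      β ^ ((t - T) / (p * T)) := by
  have hpT : 0 < p * T := by positivity
  set s : ℝ := (T - t) / (p * T) with hs_def
  have hs0 : 0 ≤ s := div_nonneg (by linarith) hpT.le
  have hs1 : s ≤ 1 := by rw [div_le_one hpT]; nlinarith
  have hD : 0 < β * Real.exp ((p - 1) * T * ξ ^ 2) + Real.exp (-T * ξ ^ 2) := by positivity
  have hβs : 0 < β ^ s := Real.rpow_pos_of_pos hβ s
  rw [div_le_iff₀ hD]
  have hexp : (t - T) / (p * T) = -s := by rw [hs_def]; ring
  rw [hexp, Real.rpow_neg hβ.le]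
  rw [inv_mul_eq_div, le_div_iff₀ hβs, mul_comm]
  -- goal: β ^ s * exp (-t * ξ ^ 2) ≤ β * exp ((p-1)*T*ξ^2) + exp (-T*ξ^2)
  have key := Real.geom_mean_le_arith_mean2_weighted hs0 (by linarith : (0:ℝ) ≤ 1 - s)
    (le_of_lt (by positivity : (0:ℝ) < β * Real.exp ((p - 1) * T * ξ ^ 2)))
    (Real.exp_pos (-T * ξ ^ 2)).le (by ring)
  have hlhs : (β * Real.exp ((p - 1) * T * ξ ^ 2)) ^ s * Real.exp (-T * ξ ^ 2) ^ (1 - s)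
      = β ^ s * Real.exp (-t * ξ ^ 2) := by
    rw [Real.mul_rpow hβ.le (Real.exp_pos _).le, ← Real.exp_mul, ← Real.exp_mul,
      mul_assoc, ← Real.exp_add]
    congr 1
    rw [hs_def]
    field_simp
    congr 1
    field_simp
    ring
  rw [hlhs] at key
  have hsum : s * (β * Real.exp ((p - 1) * T * ξ ^ 2)) + (1 - s) * Real.exp (-T * ξ ^ 2)
      ≤ β * Real.exp ((p - 1) * T * ξ ^ 2) + Real.exp (-T * ξ ^ 2) := by
    have h1 : 0 ≤ (1 - s) * (β * Real.exp ((p - 1) * T * ξ ^ 2)) :=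
      mul_nonneg (by linarith) (by positivity)
    have h2 : 0 ≤ s * Real.exp (-T * ξ ^ 2) := mul_nonneg hs0 (Real.exp_pos _).le
    nlinarith
  linarith
end

section
/- For 0 ≤ t ≤ s ≤ T, T > 0, p > 1, β > 0, and all real ξ, the kernel B(ξ,s,t) = e^{(s-t-T)ξ²}/(β e^{(p-1)Tξ²} + e^{-Tξ²}) satisfies B(ξ,s,t) ≤ β^{(t-s)/(pT)}. -/
open Real

theorem kernel_B_bound (T p β t s ξ : ℝ) (hT : 0 < T) (hp : 1 < p) (hβ : 0 < β)
    (ht0 : 0 ≤ t) (hts : t ≤ s) (hsT : s ≤ T) :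
    Real.exp ((s - t - T) * ξ ^ 2) / (β * Real.exp ((p - 1) * T * ξ ^ 2) + Real.exp (-T * ξ ^ 2)) ≤
      β ^ ((t - s) / (p * T)) := by
  have hx0 : (0:ℝ) ≤ ξ ^ 2 := sq_nonneg ξ
  have hpT : 0 < p * T := by nlinarith
  set a : ℝ := (s - t) / (p * T) with ha
  have ha0 : 0 ≤ a := div_nonneg (by linarith) hpT.le
  have ha1 : a ≤ 1 := by
    rw [ha, div_le_one hpT]; nlinarith
  have hexp : (t - s) / (p * T) = -a := by rw [ha]; ring
  rw [hexp]
  have hD : 0 < β * Real.exp ((p - 1) * T * ξ ^ 2) + Real.exp (-T * ξ ^ 2) := by positivity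
  rw [div_le_iff₀ hD]
  set z : ℝ := β * Real.exp (p * T * ξ ^ 2) with hz
  have hz0 : 0 < z := by positivity
  have hza : z ^ a ≤ 1 + z := by
    rcases le_total z 1 with h | h
    · calc z ^ a ≤ 1 := Real.rpow_le_one hz0.le h ha0
        _ ≤ 1 + z := by linarith
    · calc z ^ a ≤ z ^ (1:ℝ) := Real.rpow_le_rpow_of_exponent_le h ha1
        _ = z := Real.rpow_one z
        _ ≤ 1 + z := by linarith
  have hβa : 0 < β ^ a := Real.rpow_pos_of_pos hβ a
  have hzpow : z ^ a = β ^ a * Real.exp ((s - t) * ξ ^ 2) := by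
    rw [hz, Real.mul_rpow hβ.le (Real.exp_pos _).le,
      Real.rpow_def_of_pos (Real.exp_pos _), Real.log_exp]
    congr 2
    rw [ha]
    field_simp
  have hmain : Real.exp ((s - t) * ξ ^ 2) ≤ β ^ (-a) * (1 + z) := by
    rw [Real.rpow_neg hβ.le]
    rw [hzpow] at hza
    rw [inv_mul_eq_div, le_div_iff₀ hβa]
    linarith [hza]
  have hfact : β * Real.exp ((p - 1) * T * ξ ^ 2) + Real.exp (-T * ξ ^ 2)
      = (1 + z) * Real.exp (-T * ξ ^ 2) := by
    have h1 : Real.exp (p * T * ξ ^ 2) * Real.exp (-T * ξ ^ 2)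
        = Real.exp ((p - 1) * T * ξ ^ 2) := by
      rw [← Real.exp_add]; ring_nf
    rw [hz]; linear_combination (-β) * h1
  have hnum : Real.exp ((s - t - T) * ξ ^ 2)
      = Real.exp ((s - t) * ξ ^ 2) * Real.exp (-T * ξ ^ 2) := by
    rw [← Real.exp_add]; ring_nf
  rw [hfact, hnum]
  calc Real.exp ((s - t) * ξ ^ 2) * Real.exp (-T * ξ ^ 2)
      ≤ (β ^ (-a) * (1 + z)) * Real.exp (-T * ξ ^ 2) := by
        exact mul_le_mul_of_nonneg_right hmain (Real.exp_pos _).le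
    _ = β ^ (-a) * ((1 + z) * Real.exp (-T * ξ ^ 2)) := by ring
end

section
/- Let T > 0, p > 1, 0 < β ≤ 1, 0 ≤ t ≤ T. Suppose u is such that û(ξ,t) = e^{(T-t)ξ²} φ̂(ξ) with φ ∈ L²(ℝ), û(·,0) ∈ L²(ℝ), and ‖u(·,0)‖_{L²} ≤ E₁. If ŵ(ξ,t) = [e^{-tξ²}/(β e^{(p-1)Tξ²} + e^{-Tξ²})] φ̂(ξ), then ‖u(·,t) − w(·,t)‖_{L²} ≤ β^{t/(pT)} E₁. -/
open Real MeasureTheory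

lemma key_ineq (T p β t s : ℝ) (hT : 0 < T) (hp : 1 < p)
    (hβ0 : 0 < β) (hβ1 : β ≤ 1) (ht0 : 0 ≤ t) (htT : t ≤ T) (hs : 0 ≤ s) :
    |Real.exp ((T - t) * s) -
      Real.exp (-t * s) / (β * Real.exp ((p - 1) * T * s) + Real.exp (-T * s))|
      ≤ β ^ (t / (p * T)) * Real.exp (T * s) := by
  set D : ℝ := β * Real.exp ((p - 1) * T * s) + Real.exp (-T * s) with hDdef
  have hD : 0 < D := by positivity
  have hid : Real.exp ((T - t) * s) * D
      = β * Real.exp ((p * T - t) * s) + Real.exp (-t * s) := by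
    rw [hDdef, mul_add, mul_comm β, ← mul_assoc, ← Real.exp_add, ← Real.exp_add]
    ring_nf
  have hdiff : Real.exp ((T - t) * s) - Real.exp (-t * s) / D
      = β * Real.exp ((p * T - t) * s) / D := by
    rw [eq_div_iff hD.ne', sub_mul, div_mul_cancel₀ _ hD.ne', hid]; ring
  set θ : ℝ := t / (p * T) with hθdef
  have hpT : 0 < p * T := by positivity
  have hθ0 : 0 ≤ θ := by positivity
  have hθ1 : θ ≤ 1 := by
    rw [hθdef, div_le_one hpT]; nlinarith
  have hβθ : 0 ≤ β ^ θ := Real.rpow_nonneg hβ0.le θ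
  rw [hdiff, abs_of_nonneg (by positivity)]
  rw [div_le_iff₀ hD]
  have hid2 : Real.exp (T * s) * D = β * Real.exp (p * T * s) + 1 := by
    rw [hDdef, mul_add, mul_comm β, ← mul_assoc, ← Real.exp_add, ← Real.exp_add,
      show T * s + (p - 1) * T * s = p * T * s by ring,
      show T * s + -T * s = 0 by ring, Real.exp_zero]
    ring
  have hx1 : (1:ℝ) ≤ Real.exp (p * T * s) := Real.one_le_exp (by positivity)
  set x : ℝ := Real.exp (p * T * s) with hxdef
  have hx : Real.exp ((p * T - t) * s) = x ^ (1 - θ) := by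
    rw [hxdef, ← Real.exp_mul]
    congr 1
    rw [hθdef]
    field_simp
  have hcore : β * x ^ (1 - θ) ≤ β ^ θ * (β * x + 1) := by
    have hβsplit : β ^ θ * β ^ (1 - θ) = β := by
      rw [← Real.rpow_add hβ0]; norm_num
    have h1 : β * x ^ (1 - θ) = β ^ θ * (β * x) ^ (1 - θ) := by
      rw [Real.mul_rpow hβ0.le (by linarith : (0:ℝ) ≤ x)]
      linear_combination (- x ^ (1 - θ)) * hβsplit
    rw [h1]
    have h2 : (β * x) ^ (1 - θ) ≤ (β * x + 1) ^ (1 - θ) :=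
      Real.rpow_le_rpow (by positivity) (by linarith) (by linarith)
    have h3 : (β * x + 1) ^ (1 - θ) ≤ β * x + 1 := by
      nth_rewrite 2 [← Real.rpow_one (β * x + 1)]
      exact Real.rpow_le_rpow_of_exponent_le (by nlinarith) (by linarith)
    nlinarith
  calc β * Real.exp ((p * T - t) * s) = β * x ^ (1 - θ) := by rw [hx]
    _ ≤ β ^ θ * (β * x + 1) := hcore
    _ = β ^ θ * (Real.exp (T * s) * D) := by rw [hid2]
    _ = β ^ θ * Real.exp (T * s) * D := by ring

/-- If the exact solution satisfies `û(ξ,t) = e^{(T-t)ξ²} φ̂(ξ)` with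
`û(·,0) = e^{Tξ²}φ̂ ∈ L²` and `‖u(·,0)‖ ≤ E₁`, then the regularized solution
`ŵ(ξ,t) = A(ξ,t)φ̂(ξ)` satisfies `‖u(·,t) − w(·,t)‖ ≤ β^{t/(pT)} E₁` (Plancherel). -/
theorem approximation_error (T p β t E₁ : ℝ) (hT : 0 < T) (hp : 1 < p)
    (hβ0 : 0 < β) (hβ1 : β ≤ 1) (ht0 : 0 ≤ t) (htT : t ≤ T)
    (φh : ℝ → ℂ) (hφ : MemLp φh 2 volume)
    (hu0 : MemLp (fun ξ : ℝ => (Real.exp (T * ξ ^ 2) : ℂ) * φh ξ) 2 volume)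
    (hE : eLpNorm (fun ξ : ℝ => (Real.exp (T * ξ ^ 2) : ℂ) * φh ξ) 2 volume
            ≤ ENNReal.ofReal E₁) :
    eLpNorm
      (fun ξ : ℝ =>
        (Real.exp ((T - t) * ξ ^ 2) : ℂ) * φh ξ -
        (Real.exp (-t * ξ ^ 2) /
            (β * Real.exp ((p - 1) * T * ξ ^ 2) + Real.exp (-T * ξ ^ 2)) : ℂ) * φh ξ)
      2 volume
      ≤ ENNReal.ofReal (β ^ (t / (p * T)) * E₁) := by
  set c : ℝ := β ^ (t / (p * T)) with hcdef
  have hc0 : 0 ≤ c := Real.rpow_nonneg hβ0.le _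
  have hpt : ∀ ξ : ℝ,
      ‖(Real.exp ((T - t) * ξ ^ 2) : ℂ) * φh ξ -
        (Real.exp (-t * ξ ^ 2) /
            (β * Real.exp ((p - 1) * T * ξ ^ 2) + Real.exp (-T * ξ ^ 2)) : ℂ) * φh ξ‖
      ≤ ‖((c : ℂ) • fun ξ : ℝ => (Real.exp (T * ξ ^ 2) : ℂ) * φh ξ) ξ‖ := by
    intro ξ
    simp only [Pi.smul_apply, smul_eq_mul, ← mul_assoc, ← sub_mul, norm_mul]
    apply mul_le_mul_of_nonneg_right _ (norm_nonneg _)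
    have h1 : ((Real.exp ((T - t) * ξ ^ 2) : ℂ) -
        (Real.exp (-t * ξ ^ 2) /
            (β * Real.exp ((p - 1) * T * ξ ^ 2) + Real.exp (-T * ξ ^ 2)) : ℂ))
        = ((Real.exp ((T - t) * ξ ^ 2) -
            Real.exp (-t * ξ ^ 2) /
            (β * Real.exp ((p - 1) * T * ξ ^ 2) + Real.exp (-T * ξ ^ 2)) : ℝ) : ℂ) := by
      push_cast; ring
    have h2 : (c : ℂ) * (Real.exp (T * ξ ^ 2) : ℂ)
        = ((c * Real.exp (T * ξ ^ 2) : ℝ) : ℂ) := by push_cast; ring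
    rw [h1, Complex.norm_real, Complex.norm_real, Complex.norm_real,
      Real.norm_eq_abs, Real.norm_eq_abs, Real.norm_eq_abs,
      abs_of_nonneg hc0, abs_of_nonneg (Real.exp_pos _).le]
    exact key_ineq T p β t (ξ ^ 2) hT hp hβ0 hβ1 ht0 htT (sq_nonneg ξ)
  calc eLpNorm _ 2 volume
      ≤ eLpNorm ((c : ℂ) • fun ξ : ℝ => (Real.exp (T * ξ ^ 2) : ℂ) * φh ξ) 2 volume :=
        eLpNorm_mono hpt
    _ = (‖(c : ℂ)‖₊ : ENNReal) * eLpNorm (fun ξ : ℝ => (Real.exp (T * ξ ^ 2) : ℂ) * φh ξ) 2 volume :=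
        eLpNorm_const_smul _ _ _ _
    _ ≤ ENNReal.ofReal c * ENNReal.ofReal E₁ := by
        have hcn : (‖(c : ℂ)‖₊ : ENNReal) = ENNReal.ofReal c := by
          rw [← Real.enorm_eq_ofReal hc0]; simp; exact (enorm_eq_nnnorm c).symm
        rw [hcn]; exact mul_le_mul_right hE _
    _ = ENNReal.ofReal (c * E₁) := (ENNReal.ofReal_mul hc0).symm
end

section
/- For β ∈ (0,1), T > 0, p > 1, 0 ≤ t ≤ T, and all real ξ, one has β e^{(pT−t)ξ²}/(1 + β e^{pTξ²}) ≤ β^{t/(pT)}. -/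
open Real

theorem truncation_kernel_bound (T p β t ξ : ℝ) (hT : 0 < T) (hp : 1 < p)
    (hβ0 : 0 < β) (hβ1 : β < 1) (ht0 : 0 ≤ t) (htT : t ≤ T) :
    β * Real.exp ((p * T - t) * ξ ^ 2) / (1 + β * Real.exp (p * T * ξ ^ 2)) ≤
      β ^ (t / (p * T)) := by
  have hc : 0 < p * T := by positivity
  set α : ℝ := t / (p * T) with hα
  have hα0 : 0 ≤ α := div_nonneg ht0 hc.le
  have hα1 : α ≤ 1 := by
    rw [hα, div_le_one hc]
    nlinarith
  set B : ℝ := β * Real.exp (p * T * ξ ^ 2) with hB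
  have hBpos : 0 < B := by positivity
  have hden : 0 < 1 + B := by linarith
  rw [div_le_iff₀ hden]
  -- key: B ^ (1 - α) ≤ 1 + B
  have hkey : B ^ (1 - α) ≤ 1 + B := by
    rcases le_or_gt B 1 with hB1 | hB1
    · calc B ^ (1 - α) ≤ 1 := Real.rpow_le_one hBpos.le hB1 (by linarith)
        _ ≤ 1 + B := by linarith
    · calc B ^ (1 - α) ≤ B ^ (1 : ℝ) :=
          Real.rpow_le_rpow_of_exponent_le hB1.le (by linarith)
        _ = B := Real.rpow_one B
        _ ≤ 1 + B := by linarith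
  have heq : β * Real.exp ((p * T - t) * ξ ^ 2) = β ^ α * B ^ (1 - α) := by
    have h1 : B ^ (1 - α) = β ^ (1 - α) * Real.exp (p * T * ξ ^ 2 * (1 - α)) := by
      rw [hB, Real.mul_rpow hβ0.le (Real.exp_pos _).le, ← Real.exp_mul]
    have h2 : p * T * ξ ^ 2 * (1 - α) = (p * T - t) * ξ ^ 2 := by
      rw [hα]; field_simp
    have h3 : α + (1 - α) = 1 := by ring
    rw [h1, h2, ← mul_assoc, ← Real.rpow_add hβ0, h3, Real.rpow_one]
  rw [heq]
  exact mul_le_mul_of_nonneg_left hkey (Real.rpow_nonneg hβ0.le α)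
end
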